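/- Let n, k, t be integers with 2 ≤ k ≤ n, t ≥ 2 and kt ≤ n/2. Let S(1),…,S(t) be i.i.d. uniformly random k-element subsets of {1,…,n}. Then the number of repetitions M = Σ_{i=2}^t |(S(1)∪…∪S(i−1)) ∩ S(i)| is stochastically dominated by a Bin(kt, 2kt/n) random variable. -/

import Mathlib

open MeasureTheory ProbabilityTheory

open Finset


noncomputable def binPMF (p : ℝ) (N j : ℕ) : ℝ := (N.choose j : ℝ) * p ^ j * (1 - p) ^ (N - j)

noncomputable def binTail (p : ℝ) (N x : ℕ) : ℝ := ∑ j ∈ Finset.Icc x N, binPMF p N j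

variable {p : ℝ}

lemma binPMF_nonneg (hp0 : 0 ≤ p) (hp1 : p ≤ 1) (N j : ℕ) : 0 ≤ binPMF p N j := by
  unfold binPMF
  have : (0:ℝ) ≤ 1 - p := by linarith
  positivity

lemma binTail_nonneg (hp0 : 0 ≤ p) (hp1 : p ≤ 1) (N x : ℕ) : 0 ≤ binTail p N x :=
  Finset.sum_nonneg fun j _ => binPMF_nonneg hp0 hp1 N j

lemma binTail_zero_right (N : ℕ) : binTail p N 0 = 1 := by
  have h := add_pow p (1 - p) N
  simp only [add_sub_cancel, one_pow] at h
  unfold binTail binPMF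
  rw [show Finset.Icc 0 N = Finset.range (N+1) by ext j; simp [Nat.lt_succ_iff]]
  refine Eq.trans ?_ h.symm
  apply Finset.sum_congr rfl
  intro j _; ring

lemma binTail_anti (hp0 : 0 ≤ p) (hp1 : p ≤ 1) (N : ℕ) {x y : ℕ} (hxy : x ≤ y) : binTail p N y ≤ binTail p N x := by
  apply Finset.sum_le_sum_of_subset_of_nonneg
  · apply Finset.Icc_subset_Icc_left hxy
  · intro j _ _; exact binPMF_nonneg hp0 hp1 N j

lemma binTail_le_one (hp0 : 0 ≤ p) (hp1 : p ≤ 1) (N x : ℕ) : binTail p N x ≤ 1 := by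
  rw [← binTail_zero_right (p := p) N]
  exact binTail_anti hp0 hp1 N (Nat.zero_le x)

lemma binTail_zero_left (x : ℕ) : binTail p 0 x = if x = 0 then 1 else 0 := by
  unfold binTail binPMF
  rcases Nat.eq_zero_or_pos x with h | h
  · subst h; simp
  · rw [if_neg (by omega)]
    rw [Finset.Icc_eq_empty (by omega)]
    simp

lemma binTail_succ (N x : ℕ) : binTail p (N+1) x = (1 - p) * binTail p N x + p * binTail p N (x-1) := by
  rcases Nat.eq_zero_or_pos x with h | h
  · subst h
    simp only [Nat.zero_sub, binTail_zero_right]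
    ring
  · obtain ⟨y, rfl⟩ := Nat.exists_eq_add_of_le h
    -- x = 1 + y
    unfold binTail binPMF
    have key : ∀ j ∈ Finset.Icc (1+y) (N+1), ((N+1).choose j : ℝ) * p ^ j * (1-p)^(N+1-j)
        = (N.choose j : ℝ) * p ^ j * (1-p)^(N+1-j) + (N.choose (j-1) : ℝ) * p ^ j * (1-p)^(N+1-j) := by
      intro j hj
      simp only [Finset.mem_Icc] at hj
      have h1 : j = (j-1) + 1 := by omega
      rw [h1, Nat.choose_succ_succ']
      push_cast
      ring
    rw [Finset.sum_congr rfl key, Finset.sum_add_distrib]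
    congr 1
    · -- first sum: drop j = N+1 term (choose N (N+1) = 0), factor (1-p)
      rw [Finset.mul_sum]
      rcases Nat.lt_or_ge N (1+y) with hN | hN
      · -- Icc (1+y) (N+1): if 1+y > N+1 both empty; if 1+y = N+1, single term j=N+1 gives 0
        rcases Nat.lt_or_ge (N+1) (1+y) with h2 | h2
        · rw [Finset.Icc_eq_empty (by omega), Finset.Icc_eq_empty (by omega)]; simp
        · have : 1 + y = N + 1 := by omega
          rw [this, Finset.Icc_self, Finset.Icc_eq_empty (by omega)]
          simp [Nat.choose_succ_self]
      · rw [show Finset.Icc (1+y) (N+1) = insert (N+1) (Finset.Icc (1+y) N) by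
          ext j; simp [Finset.mem_Icc, Finset.mem_insert]; omega]
        rw [Finset.sum_insert (by simp [Finset.mem_Icc])]
        simp only [Nat.choose_succ_self, Nat.cast_zero, zero_mul, zero_add]
        apply Finset.sum_congr rfl
        intro j hj
        simp only [Finset.mem_Icc] at hj
        rw [show N + 1 - j = (N - j) + 1 by omega]
        ring
    · -- second sum: reindex
      rw [Finset.mul_sum]
      rw [show Finset.Icc (1+y) (N+1) = Finset.map ⟨fun j => j + 1, add_left_injective 1⟩ (Finset.Icc y N) by
        ext j; simp [Finset.mem_Icc, Finset.mem_map]; constructor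
        · intro hj; exact ⟨j - 1, by omega, by omega⟩
        · rintro ⟨a, ha, rfl⟩; omega]
      rw [Finset.sum_map]
      apply Finset.sum_congr (by congr 1; omega)
      intro j hj
      simp only [Finset.mem_Icc] at hj
      simp only [Function.Embedding.coeFn_mk, Nat.add_sub_cancel]
      rw [show N + 1 - (j+1) = N - j by omega]
      ring

lemma binTail_conv (N K x : ℕ) :
    binTail p (N + K) x = ∑ j ∈ Finset.range (N+1), binPMF p N j * binTail p K (x - j) := by
  induction K generalizing x with
  | zero =>
    simp only [Nat.add_zero, binTail_zero_left]
    unfold binTail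
    rw [show Finset.Icc x N = (Finset.range (N+1)).filter (fun j => x ≤ j) by
      ext j; simp [Finset.mem_Icc, Nat.lt_succ_iff]; omega]
    rw [Finset.sum_filter]
    apply Finset.sum_congr rfl
    intro j _
    rcases Nat.lt_or_ge j x with h | h
    · rw [if_neg (by omega), if_neg (by omega), mul_zero]
    · rw [if_pos (by omega), if_pos (by omega), mul_one]
  | succ K ih =>
    rw [show N + (K+1) = (N + K) + 1 by ring, binTail_succ, ih, ih,
      Finset.mul_sum, Finset.mul_sum, ← Finset.sum_add_distrib]
    apply Finset.sum_congr rfl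
    intro j _
    rw [binTail_succ (p := p) K (x - j), show x - j - 1 = x - 1 - j by omega]
    ring


lemma layered {g : ℕ → ℝ} {x : ℕ} (hgc : ∀ m, x ≤ m → g m = g x) (m : ℕ) :
    g m = g 0 + ∑ r ∈ Finset.Icc 1 x, (g r - g (r-1)) * (if r ≤ m then 1 else 0) := by
  have h1 : ∑ r ∈ Finset.Icc 1 x, (g r - g (r-1)) * (if r ≤ m then 1 else 0)
      = ∑ r ∈ Finset.Icc 1 (min m x), (g r - g (r-1)) := by
    rw [show Finset.Icc 1 (min m x) = (Finset.Icc 1 x).filter (fun r => r ≤ m) by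
      ext r; simp [Finset.mem_Icc, Finset.mem_filter]; omega]
    rw [Finset.sum_filter]
    apply Finset.sum_congr rfl
    intro r _
    split <;> ring
  have h2 : ∀ L : ℕ, ∑ r ∈ Finset.Icc 1 L, (g r - g (r-1)) = g L - g 0 := by
    intro L
    rw [show Finset.Icc 1 L = Finset.map ⟨fun j => j + 1, add_left_injective 1⟩ (Finset.range L) by
      ext j; simp [Finset.mem_Icc, Finset.mem_map]; constructor
      · intro hj; exact ⟨j - 1, by omega, by omega⟩
      · rintro ⟨a, ha, rfl⟩; omega]
    rw [Finset.sum_map]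
    simp only [Function.Embedding.coeFn_mk, Nat.add_sub_cancel]
    exact Finset.sum_range_sub g L
  rw [h1, h2]
  rcases Nat.le_total m x with h | h
  · rw [min_eq_left h]; ring
  · rw [min_eq_right h, hgc m h]; ring

lemma weighted_layer {ι : Type*} [Fintype ι] (w : ι → ℝ) (hw1 : ∑ i, w i = 1)
    (s : ι → ℕ) {g : ℕ → ℝ} {x : ℕ} (hgc : ∀ m, x ≤ m → g m = g x) :
    ∑ i, w i * g (s i) = g 0 + ∑ r ∈ Finset.Icc 1 x,
      (g r - g (r-1)) * ∑ i ∈ Finset.univ.filter (fun i => r ≤ s i), w i := by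
  have : ∀ i : ι, w i * g (s i) = w i * g 0 + ∑ r ∈ Finset.Icc 1 x,
      (g r - g (r-1)) * (if r ≤ s i then w i else 0) := by
    intro i
    rw [layered hgc (s i), mul_add, Finset.mul_sum]
    congr 1
    apply Finset.sum_congr rfl
    intro r _
    split <;> ring
  rw [Finset.sum_congr rfl (fun i _ => this i), Finset.sum_add_distrib, ← Finset.sum_mul, hw1, one_mul]
  congr 1
  rw [Finset.sum_comm]
  apply Finset.sum_congr rfl
  intro r _
  rw [Finset.mul_sum, Finset.sum_filter]
  apply Finset.sum_congr rfl
  intro i _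
  split <;> ring

lemma expect_le (hp0 : 0 ≤ p) (hp1 : p ≤ 1) {ι : Type*} [Fintype ι] (w : ι → ℝ)
    (hw0 : ∀ i, 0 ≤ w i) (hw1 : ∑ i, w i = 1) (s : ι → ℕ) (N : ℕ)
    (hdom : ∀ m, ∑ i ∈ Finset.univ.filter (fun i => m ≤ s i), w i ≤ binTail p N m)
    (K x : ℕ) :
    ∑ i, w i * binTail p K (x - s i) ≤ binTail p (N + K) x := by
  set g : ℕ → ℝ := fun m => binTail p K (x - m) with hg
  have hgc : ∀ m, x ≤ m → g m = g x := by
    intro m hm; simp only [hg, Nat.sub_self, Nat.sub_eq_zero_of_le hm]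
  have hmono : ∀ r : ℕ, 0 ≤ g r - g (r-1) := by
    intro r
    have := binTail_anti hp0 hp1 K (show x - r ≤ x - (r-1) by omega)
    simp only [hg]; linarith
  rw [weighted_layer w hw1 s hgc]
  have hbin1 : ∑ j : Fin (N+1), binPMF p N j = 1 := by
    rw [Fin.sum_univ_eq_sum_range (fun j => binPMF p N j) (N+1)]
    have := binTail_zero_right (p := p) N
    unfold binTail at this
    rw [← this]
    apply Finset.sum_congr _ (fun j _ => rfl)
    ext j; simp [Nat.lt_succ_iff]
  have hbtail : ∀ m : ℕ, ∑ j ∈ Finset.univ.filter (fun j : Fin (N+1) => m ≤ (j : ℕ)), binPMF p N (j : ℕ)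
      = binTail p N m := by
    intro m
    unfold binTail
    rw [Finset.sum_filter, Fin.sum_univ_eq_sum_range (fun j => if m ≤ j then binPMF p N j else 0) (N+1),
      ← Finset.sum_filter]
    apply Finset.sum_congr _ (fun j _ => rfl)
    ext j; simp [Finset.mem_Icc, Nat.lt_succ_iff]; omega
  have hrhs : binTail p (N + K) x = g 0 + ∑ r ∈ Finset.Icc 1 x,
      (g r - g (r-1)) * binTail p N r := by
    rw [binTail_conv, ← Fin.sum_univ_eq_sum_range (fun j => binPMF p N j * binTail p K (x - j)) (N+1)]
    rw [weighted_layer (fun j : Fin (N+1) => binPMF p N (j : ℕ)) hbin1 (fun j => (j : ℕ)) hgc]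
    congr 1
    apply Finset.sum_congr rfl
    intro r _
    rw [hbtail r]
  rw [hrhs]
  gcongr with r hr
  · exact hmono r
  · exact hdom r


def Ncount (n : ℕ) (A : Finset (Fin n)) (k m : ℕ) : ℕ :=
  ((Finset.powersetCard k (Finset.univ : Finset (Fin n))).filter
    (fun S => m ≤ (A ∩ S).card)).card

def Ecount (n : ℕ) (A : Finset (Fin n)) (k m : ℕ) : ℕ :=
  ((Finset.powersetCard k (Finset.univ : Finset (Fin n))).filter
    (fun S => (A ∩ S).card = m)).card

lemma Ncount_split (n : ℕ) (A : Finset (Fin n)) (k m : ℕ) :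
    Ncount n A k m = Ecount n A k m + Ncount n A k (m+1) := by
  unfold Ncount Ecount
  rw [Finset.card_filter, Finset.card_filter, Finset.card_filter, ← Finset.sum_add_distrib]
  apply Finset.sum_congr rfl
  intro S _
  rcases Nat.lt_or_ge ((A ∩ S).card) m with h | h
  · rw [if_neg (by omega), if_neg (by omega), if_neg (by omega)]
  · rcases Nat.eq_or_lt_of_le h with h2 | h2
    · rw [if_pos (by omega), if_pos (by omega), if_neg (by omega)]
    · rw [if_pos (by omega), if_neg (by omega), if_pos (by omega)]

lemma count_rec (n : ℕ) (A : Finset (Fin n)) (k m : ℕ) (hm : 1 ≤ m) :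
    (k+1) * Ncount n A (k+1) m
      = (n - k) * Ncount n A k m + (A.card - (m-1)) * Ecount n A k (m-1) := by
  classical
  set Q : Finset (Finset (Fin n) × Fin n) :=
    ((Finset.powersetCard k (Finset.univ : Finset (Fin n))) ×ˢ Finset.univ).filter
      (fun q => q.2 ∉ q.1 ∧ m ≤ (A ∩ insert q.2 q.1).card) with hQ
  -- Count 1: fibers of (S', v) ↦ insert v S'
  have hcount1 : Q.card = (k+1) * Ncount n A (k+1) m := by
    rw [Finset.card_eq_sum_card_fiberwise (f := fun q => insert q.2 q.1)
      (t := (Finset.powersetCard (k+1) (Finset.univ : Finset (Fin n))).filter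
        (fun S => m ≤ (A ∩ S).card))]
    · rw [Finset.sum_congr rfl (g := fun _ => k + 1), Finset.sum_const, smul_eq_mul]
      · unfold Ncount; ring
      · intro S hS
        simp only [Finset.mem_filter, Finset.mem_powersetCard_univ] at hS
        -- fiber over S has card S.card = k+1
        have : (Q.filter (fun q => insert q.2 q.1 = S)) =
            S.image (fun v => (S.erase v, v)) := by
          ext q
          simp only [Finset.mem_filter, Finset.mem_image, hQ, Finset.mem_product,
            Finset.mem_powersetCard_univ, Finset.mem_univ, true_and, and_true]
          constructor
          · rintro ⟨⟨hcard, hnot, hcond⟩, heq⟩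
            refine ⟨q.2, ?_, ?_⟩
            · rw [← heq]; exact Finset.mem_insert_self _ _
            · have : S.erase q.2 = q.1 := by
                rw [← heq, Finset.erase_insert hnot]
              rw [this]
          · rintro ⟨v, hv, rfl⟩
            have hins : insert v (S.erase v) = S := Finset.insert_erase hv
            refine ⟨⟨?_, ?_, ?_⟩, hins⟩
            · simp [Finset.card_erase_of_mem hv, hS.1]
            · exact Finset.notMem_erase v S
            · rw [hins]; exact hS.2
        rw [this, Finset.card_image_of_injective _ (fun a b h => by
          simpa using congrArg Prod.snd h), hS.1]
    · intro q hq
      simp only [hQ, Finset.mem_coe, Finset.mem_filter, Finset.mem_product, Finset.mem_powersetCard_univ,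
        Finset.mem_univ, true_and, and_true] at hq ⊢
      exact ⟨by rw [Finset.card_insert_of_notMem hq.2.1, hq.1], hq.2.2⟩
  -- Count 2: fibers of Prod.fst
  have hcount2 : Q.card = (n - k) * Ncount n A k m + (A.card - (m-1)) * Ecount n A k (m-1) := by
    rw [Finset.card_eq_sum_card_fiberwise (f := Prod.fst)
      (t := Finset.powersetCard k (Finset.univ : Finset (Fin n)))
      (fun q hq => by
        simp only [hQ, Finset.mem_coe, Finset.mem_filter, Finset.mem_product] at hq
        exact hq.1.1)]
    have hfiber : ∀ S' ∈ Finset.powersetCard k (Finset.univ : Finset (Fin n)),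
        (Q.filter (fun q => q.1 = S')).card
          = (Finset.univ.filter (fun v => v ∉ S' ∧ m ≤ (A ∩ insert v S').card)).card := by
      intro S' hS'
      have heq : Q.filter (fun q => q.1 = S')
          = (Finset.univ.filter (fun v => v ∉ S' ∧ m ≤ (A ∩ insert v S').card)).map
            ⟨fun v => (S', v), fun a b h => by simpa using congrArg Prod.snd h⟩ := by
        ext q
        simp only [Finset.mem_filter, hQ, Finset.mem_product, Finset.mem_map,
          Finset.mem_univ, true_and, and_true, Function.Embedding.coeFn_mk]
        constructor
        · rintro ⟨⟨hmem, h1, h2⟩, hfst⟩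
          exact ⟨q.2, ⟨by rw [hfst] at h1; exact h1, by rw [hfst] at h2; exact h2⟩,
            by rw [← hfst]; rfl⟩
        · rintro ⟨v, ⟨h1, h2⟩, rfl⟩
          exact ⟨⟨hS', h1, h2⟩, rfl⟩
      rw [heq, Finset.card_map]
    rw [Finset.sum_congr rfl hfiber]
    have hval : ∀ S' ∈ Finset.powersetCard k (Finset.univ : Finset (Fin n)),
        (Finset.univ.filter (fun v => v ∉ S' ∧ m ≤ (A ∩ insert v S').card)).card
          = (n - k) * (if m ≤ (A ∩ S').card then 1 else 0)
            + (A.card - (m-1)) * (if (A ∩ S').card = m - 1 then 1 else 0) := by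
      intro S' hS'
      simp only [Finset.mem_powersetCard_univ] at hS'
      have hcard : ∀ v, v ∉ S' → (A ∩ insert v S').card
          = (A ∩ S').card + (if v ∈ A then 1 else 0) := by
        intro v hv
        by_cases hvA : v ∈ A
        · rw [if_pos hvA, Finset.inter_insert_of_mem hvA,
            Finset.card_insert_of_notMem (fun hc => hv (Finset.mem_of_mem_inter_right hc))]
        · rw [if_neg hvA, Finset.inter_insert_of_notMem hvA, add_zero]
      rcases Nat.lt_or_ge ((A ∩ S').card) (m-1) with hc | hc
      · -- too small: count 0
        rw [if_neg (by omega), if_neg (by omega), mul_zero, mul_zero, add_zero]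
        rw [Finset.card_eq_zero]
        apply Finset.filter_eq_empty_iff.mpr
        intro v _
        push_neg
        intro hv
        rw [hcard v hv]
        split <;> omega
      · rcases Nat.eq_or_lt_of_le hc with hc2 | hc2
        · -- exactly m-1 : count = A.card - (m-1)
          rw [if_neg (by omega), if_pos hc2.symm, mul_zero, zero_add, mul_one]
          have : Finset.univ.filter (fun v => v ∉ S' ∧ m ≤ (A ∩ insert v S').card) = A \ S' := by
            ext v
            simp only [Finset.mem_filter, Finset.mem_univ, true_and, Finset.mem_sdiff]
            constructor
            · rintro ⟨hv, hcond⟩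
              rw [hcard v hv] at hcond
              refine ⟨?_, hv⟩
              by_contra hvA
              rw [if_neg hvA] at hcond; omega
            · rintro ⟨hvA, hv⟩
              refine ⟨hv, ?_⟩
              rw [hcard v hv, if_pos hvA]; omega
          rw [this]
          have := Finset.card_inter_add_card_sdiff A S'
          omega
        · -- at least m : count = n - k
          rw [if_pos (by omega), if_neg (by omega), mul_zero, add_zero, mul_one]
          have : Finset.univ.filter (fun v => v ∉ S' ∧ m ≤ (A ∩ insert v S').card) = S'ᶜ := by
            ext v
            simp only [Finset.mem_filter, Finset.mem_univ, true_and, Finset.mem_compl]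
            constructor
            · rintro ⟨hv, _⟩; exact hv
            · intro hv
              refine ⟨hv, ?_⟩
              rw [hcard v hv]
              split <;> omega
          rw [this, Finset.card_compl, hS', Fintype.card_fin]
    rw [Finset.sum_congr rfl hval, Finset.sum_add_distrib]
    unfold Ncount Ecount
    rw [Finset.card_filter, Finset.card_filter, Finset.mul_sum, Finset.mul_sum]
  omega

lemma Ncount_le (hp0 : 0 ≤ p) (hp1 : p ≤ 1) (n : ℕ) (A : Finset (Fin n)) :
    ∀ k, k ≤ n → (A.card : ℝ) ≤ p * ((n : ℝ) - k + 1) →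
    ∀ m, (Ncount n A k m : ℝ) ≤ binTail p k m * (n.choose k) := by
  intro k
  induction k with
  | zero =>
    intro _ _ m
    have : Ncount n A 0 m = if m = 0 then 1 else 0 := by
      unfold Ncount
      simp only [Finset.powersetCard_zero]
      rcases Nat.eq_zero_or_pos m with h | h
      · subst h; simp
      · rw [if_neg (by omega)]
        rw [Finset.card_eq_zero, Finset.filter_eq_empty_iff]
        intro S hS
        simp only [Finset.mem_singleton] at hS
        subst hS
        simp only [Finset.inter_empty, Finset.card_empty]
        omega
    rw [this, binTail_zero_left, Nat.choose_zero_right]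
    split <;> simp
  | succ k ih =>
    intro hkn hA m
    have hkn' : k ≤ n := by omega
    have hA' : (A.card : ℝ) ≤ p * ((n : ℝ) - k + 1) := by
      refine hA.trans ?_
      push_cast
      nlinarith [hp0]
    rcases Nat.eq_zero_or_pos m with hm | hm
    · subst hm
      rw [binTail_zero_right, one_mul]
      have : Ncount n A (k+1) 0 = n.choose (k+1) := by
        unfold Ncount
        rw [Finset.filter_true_of_mem (fun S _ => Nat.zero_le _)]
        rw [Finset.card_powersetCard, Finset.card_univ, Fintype.card_fin]
      rw [this]
    · obtain ⟨m', rfl⟩ : ∃ m', m = m' + 1 := ⟨m - 1, by omega⟩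
      have hrec := count_rec n A k (m'+1) (by omega)
      have hsplit := Ncount_split n A k m'
      -- cast to ℝ
      simp only [Nat.add_sub_cancel] at hrec
      have hnkcast : ((n - k : ℕ) : ℝ) = (n:ℝ) - k := Nat.cast_sub hkn'
      have hrecR : ((k:ℝ)+1) * Ncount n A (k+1) (m'+1)
          = ((n:ℝ) - k) * Ncount n A k (m'+1) + ((A.card - m' : ℕ) : ℝ) * Ecount n A k m' := by
        rw [← hnkcast]
        exact_mod_cast congrArg (Nat.cast : ℕ → ℝ) hrec
      have hEN : (Ecount n A k m' : ℝ) = (Ncount n A k m' : ℝ) - (Ncount n A k (m'+1) : ℝ) := by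
        rw [hsplit]; push_cast; ring
      have hApbound : ((A.card - m' : ℕ) : ℝ) ≤ p * ((n:ℝ) - k) := by
        have h1 : ((A.card - m' : ℕ) : ℝ) ≤ (A.card : ℝ) := by
          exact_mod_cast Nat.sub_le A.card m'
        have h2 : p * ((n : ℝ) - ((k:ℝ)+1) + 1) = p * ((n:ℝ) - k) := by ring
        push_cast at hA
        linarith
      have hEnn : (0:ℝ) ≤ (Ecount n A k m' : ℝ) := Nat.cast_nonneg _
      have hnk : (0:ℝ) ≤ (n:ℝ) - k := by
        have : (k:ℝ) ≤ n := by exact_mod_cast hkn'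
        linarith
      have ih1 := ih hkn' hA' (m'+1)
      have ih2 := ih hkn' hA' m'
      have hchoose : ((n:ℝ) - k) * (n.choose k : ℝ) = ((k:ℝ)+1) * (n.choose (k+1) : ℝ) := by
        have := Nat.choose_succ_right_eq n k
        have h1 : ((n - k : ℕ) : ℝ) = (n:ℝ) - k := by rw [Nat.cast_sub hkn']
        have : ((n.choose (k+1) * (k+1) : ℕ) : ℝ) = ((n.choose k * (n - k) : ℕ) : ℝ) := by
          exact_mod_cast congrArg Nat.cast this
        push_cast [h1] at this
        linarith
      have key : ((k:ℝ)+1) * (Ncount n A (k+1) (m'+1) : ℝ)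
          ≤ ((k:ℝ)+1) * (binTail p (k+1) (m'+1) * (n.choose (k+1) : ℝ)) := by
        rw [hrecR, hEN]
        have step1 : ((n:ℝ) - k) * Ncount n A k (m'+1)
            + ((A.card - m' : ℕ) : ℝ) * ((Ncount n A k m' : ℝ) - (Ncount n A k (m'+1) : ℝ))
            ≤ ((n:ℝ) - k) * ((1-p) * (Ncount n A k (m'+1) : ℝ) + p * (Ncount n A k m' : ℝ)) := by
          have hmonoN : Ncount n A k (m'+1) ≤ Ncount n A k m' :=
            hsplit ▸ Nat.le_add_left _ _
          have hmono : (Ncount n A k (m'+1) : ℝ) ≤ (Ncount n A k m' : ℝ) :=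
            Nat.cast_le.mpr hmonoN
          nlinarith [mul_nonneg (sub_nonneg.mpr hApbound) (sub_nonneg.mpr hmono), hEnn]
        refine step1.trans ?_
        have step2 : (1-p) * (Ncount n A k (m'+1) : ℝ) + p * (Ncount n A k m' : ℝ)
            ≤ (1-p) * (binTail p k (m'+1) * (n.choose k : ℝ)) + p * (binTail p k m' * (n.choose k : ℝ)) := by
          have h1p : (0:ℝ) ≤ 1 - p := by linarith
          exact add_le_add (mul_le_mul_of_nonneg_left ih1 h1p)
            (mul_le_mul_of_nonneg_left ih2 hp0)
        calc ((n:ℝ) - k) * ((1-p) * (Ncount n A k (m'+1) : ℝ) + p * (Ncount n A k m' : ℝ))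
            ≤ ((n:ℝ) - k) * ((1-p) * (binTail p k (m'+1) * (n.choose k : ℝ))
              + p * (binTail p k m' * (n.choose k : ℝ))) :=
              mul_le_mul_of_nonneg_left step2 hnk
          _ = (((n:ℝ) - k) * (n.choose k : ℝ)) * ((1-p) * binTail p k (m'+1) + p * binTail p k m') := by ring
          _ = (((k:ℝ)+1) * (n.choose (k+1) : ℝ)) * binTail p (k+1) (m'+1) := by
              rw [hchoose, binTail_succ]
              simp only [Nat.add_sub_cancel]
          _ = ((k:ℝ)+1) * (binTail p (k+1) (m'+1) * (n.choose (k+1) : ℝ)) := by ring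
      have hk1 : (0:ℝ) < (k:ℝ)+1 := by positivity
      exact le_of_mul_le_mul_left key hk1


noncomputable def wgt (n k : ℕ) (B : Finset (Fin n)) : ℝ :=
  if B.card = k then 1/(n.choose k : ℝ) else 0

def Fsum {n s : ℕ} (A : Fin s → Finset (Fin n)) : ℕ :=
  ∑ i : Fin s, ((Finset.univ.filter (fun j => j < i)).biUnion (fun j => A j) ∩ A i).card

lemma wgt_nonneg (n k : ℕ) (B : Finset (Fin n)) : 0 ≤ wgt n k B := by
  unfold wgt; split <;> positivity

lemma filter_card_eq (n k : ℕ) :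
    (Finset.univ : Finset (Finset (Fin n))).filter (fun B => B.card = k)
      = Finset.powersetCard k (Finset.univ : Finset (Fin n)) := by
  rw [Finset.powersetCard_eq_filter, Finset.powerset_univ]

lemma wgt_sum (n k : ℕ) (hkn : k ≤ n) : ∑ B : Finset (Fin n), wgt n k B = 1 := by
  unfold wgt
  rw [← Finset.sum_filter, filter_card_eq, Finset.sum_const,
    Finset.card_powersetCard, Finset.card_univ, Fintype.card_fin, nsmul_eq_mul]
  have hC : (0:ℝ) < (n.choose k : ℝ) := by exact_mod_cast Nat.choose_pos hkn
  field_simp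

lemma innerSumWgt (n k : ℕ) (U : Finset (Fin n)) (m : ℕ) :
    ∑ c : Finset (Fin n), wgt n k c * (if m ≤ (U ∩ c).card then 1 else 0)
      = (Ncount n U k m : ℝ) / (n.choose k : ℝ) := by
  unfold wgt Ncount
  have : ∀ c : Finset (Fin n),
      (if c.card = k then 1/(n.choose k : ℝ) else 0) * (if m ≤ (U ∩ c).card then 1 else 0)
        = if c.card = k ∧ m ≤ (U ∩ c).card then 1/(n.choose k : ℝ) else 0 := by
    intro c
    by_cases h1 : c.card = k <;> by_cases h2 : m ≤ (U ∩ c).card <;>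
      simp [h1, h2]
  rw [Finset.sum_congr rfl (fun c _ => this c), ← Finset.sum_filter]
  rw [Finset.sum_const, nsmul_eq_mul]
  have : (Finset.univ : Finset (Finset (Fin n))).filter
      (fun c => c.card = k ∧ m ≤ (U ∩ c).card)
      = (Finset.powersetCard k (Finset.univ : Finset (Fin n))).filter
        (fun S => m ≤ (U ∩ S).card) := by
    rw [← filter_card_eq, Finset.filter_filter]
  rw [this]
  ring

lemma hprod_snoc (n k s : ℕ) (B : Fin s → Finset (Fin n)) (c : Finset (Fin n)) :
    ∏ i : Fin (s+1), wgt n k ((Fin.snoc B c : Fin (s+1) → Finset (Fin n)) i) = (∏ i, wgt n k (B i)) * wgt n k c := by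
  rw [Fin.prod_univ_castSucc]
  simp [Fin.snoc_castSucc, Fin.snoc_last]

lemma biUnion_snoc_castSucc {n s : ℕ} (B : Fin s → Finset (Fin n)) (c : Finset (Fin n))
    (i : Fin s) :
    (Finset.univ.filter (fun j => j < Fin.castSucc i)).biUnion
        (fun j => (Fin.snoc B c : Fin (s+1) → Finset (Fin n)) j)
      = (Finset.univ.filter (fun j => j < i)).biUnion (fun j => B j) := by
  ext v
  simp only [Finset.mem_biUnion, Finset.mem_filter, Finset.mem_univ, true_and]
  constructor
  · rintro ⟨j, hj, hv⟩
    rw [Fin.lt_def] at hj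
    simp only [Fin.coe_castSucc] at hj
    have hjs : (j : ℕ) < s := by omega
    refine ⟨⟨j, hjs⟩, by rw [Fin.lt_def]; exact hj, ?_⟩
    have : j = Fin.castSucc ⟨j, hjs⟩ := by ext; simp
    rw [this, Fin.snoc_castSucc] at hv
    exact hv
  · rintro ⟨j, hj, hv⟩
    refine ⟨Fin.castSucc j, by rw [Fin.lt_def]; simpa using (Fin.lt_def.mp hj), ?_⟩
    rw [Fin.snoc_castSucc]
    exact hv

lemma biUnion_snoc_last {n s : ℕ} (B : Fin s → Finset (Fin n)) (c : Finset (Fin n)) :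
    (Finset.univ.filter (fun j => j < Fin.last s)).biUnion
        (fun j => (Fin.snoc B c : Fin (s+1) → Finset (Fin n)) j)
      = Finset.univ.biUnion (fun j => B j) := by
  ext v
  simp only [Finset.mem_biUnion, Finset.mem_filter, Finset.mem_univ, true_and]
  constructor
  · rintro ⟨j, hj, hv⟩
    rw [Fin.lt_def] at hj
    simp only [Fin.val_last] at hj
    refine ⟨⟨j, hj⟩, ?_⟩
    have : j = Fin.castSucc ⟨j, hj⟩ := by ext; simp
    rw [this, Fin.snoc_castSucc] at hv
    exact hv
  · rintro ⟨j, hv⟩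
    refine ⟨Fin.castSucc j, by rw [Fin.lt_def]; simp [j.isLt], ?_⟩
    rw [Fin.snoc_castSucc]
    exact hv

lemma fsum_snoc {n s : ℕ} (B : Fin s → Finset (Fin n)) (c : Finset (Fin n)) :
    Fsum (Fin.snoc B c) = Fsum B + ((Finset.univ.biUnion (fun j => B j)) ∩ c).card := by
  unfold Fsum
  rw [Fin.sum_univ_castSucc]
  congr 1
  · apply Finset.sum_congr rfl
    intro i _
    rw [biUnion_snoc_castSucc, Fin.snoc_castSucc]
  · rw [biUnion_snoc_last, Fin.snoc_last]

lemma main_ind (hp0 : 0 ≤ p) (hp1 : p ≤ 1) (n k t : ℕ) (hkn : k ≤ n)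
    (hbound : ((k * t : ℕ) : ℝ) ≤ p * ((n:ℝ) - k + 1)) :
    ∀ s, s ≤ t → ∀ x : ℕ,
    ∑ A ∈ (Finset.univ : Finset (Fin s → Finset (Fin n))).filter (fun A => x ≤ Fsum A),
      ∏ i, wgt n k (A i) ≤ binTail p (k*s) x := by
  intro s
  induction s with
  | zero =>
    intro _ x
    rcases Nat.eq_zero_or_pos x with rfl | hx
    · rw [Nat.mul_zero, binTail_zero_right]
      rw [Finset.filter_true_of_mem (fun A _ => Nat.zero_le _)]
      rw [Finset.sum_congr rfl (fun A _ => Finset.prod_of_isEmpty _)]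
      rw [Finset.sum_const, Finset.card_univ, nsmul_eq_mul, mul_one]
      have : Fintype.card (Fin 0 → Finset (Fin n)) = 1 := by
        rw [Fintype.card_pi]
        simp
      rw [this, Nat.cast_one]
    · have : ∀ A : Fin 0 → Finset (Fin n), Fsum A = 0 := by
        intro A; unfold Fsum; simp
      rw [Finset.filter_false_of_mem (fun A _ => by rw [this A]; omega)]
      rw [Finset.sum_empty]
      exact binTail_nonneg hp0 hp1 _ _
  | succ s ih =>
    intro hst x
    have hst' : s ≤ t := by omega
    set C : ℝ := (n.choose k : ℝ) with hC
    have hCpos : (0:ℝ) < C := by rw [hC]; exact_mod_cast Nat.choose_pos hkn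
    rw [Finset.sum_filter]
    rw [← Equiv.sum_comp (Fin.snocEquiv (fun _ => Finset (Fin n)))
      (fun A => if x ≤ Fsum A then ∏ i, wgt n k (A i) else 0)]
    rw [Fintype.sum_prod_type]
    rw [Finset.sum_comm]
    -- now : ∑ B, ∑ c, if x ≤ Fsum (snoc B c) then ∏ wgt (snoc B c) else 0
    have hterm : ∀ (B : Fin s → Finset (Fin n)) (c : Finset (Fin n)),
        (if x ≤ Fsum (Fin.snocEquiv (fun _ => Finset (Fin n)) (c, B))
          then ∏ i, wgt n k ((Fin.snocEquiv (fun _ => Finset (Fin n)) (c, B)) i) else 0)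
        = (∏ i, wgt n k (B i)) * (wgt n k c *
            (if x - Fsum B ≤ ((Finset.univ.biUnion (fun j => B j)) ∩ c).card then 1 else 0)) := by
      intro B c
      have hsnoc : (Fin.snocEquiv (fun _ => Finset (Fin n)) (c, B)) = Fin.snoc B c := rfl
      rw [hsnoc, fsum_snoc, hprod_snoc]
      by_cases h : x ≤ Fsum B + ((Finset.univ.biUnion (fun j => B j)) ∩ c).card
      · rw [if_pos h, if_pos (by omega), mul_one]
      · rw [if_neg h, if_neg (by omega), mul_zero, mul_zero]
    rw [Finset.sum_congr rfl (fun B _ => Finset.sum_congr rfl (fun c _ => hterm B c))]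
    have hinner : ∀ B : Fin s → Finset (Fin n),
        ∑ c : Finset (Fin n), (∏ i, wgt n k (B i)) * (wgt n k c *
            (if x - Fsum B ≤ ((Finset.univ.biUnion (fun j => B j)) ∩ c).card then 1 else 0))
        = (∏ i, wgt n k (B i)) *
            ((Ncount n (Finset.univ.biUnion (fun j => B j)) k (x - Fsum B) : ℝ) / C) := by
      intro B
      rw [← Finset.mul_sum, innerSumWgt]
    rw [Finset.sum_congr rfl (fun B _ => hinner B)]
    have hwB0 : ∀ B : Fin s → Finset (Fin n), 0 ≤ ∏ i, wgt n k (B i) :=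
      fun B => Finset.prod_nonneg (fun i _ => wgt_nonneg n k (B i))
    have hle : ∀ B : Fin s → Finset (Fin n),
        (∏ i, wgt n k (B i)) *
            ((Ncount n (Finset.univ.biUnion (fun j => B j)) k (x - Fsum B) : ℝ) / C)
        ≤ (∏ i, wgt n k (B i)) * binTail p k (x - Fsum B) := by
      intro B
      rcases eq_or_ne (∏ i, wgt n k (B i)) 0 with h0 | h0
      · rw [h0, zero_mul, zero_mul]
      · apply mul_le_mul_of_nonneg_left _ (hwB0 B)
        -- all blocks have card k
        have hcards : ∀ i, (B i).card = k := by
          intro i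
          have := Finset.prod_ne_zero_iff.mp h0 i (Finset.mem_univ i)
          unfold wgt at this
          by_contra hne
          rw [if_neg hne] at this
          exact this rfl
        have hU : ((Finset.univ.biUnion (fun j => B j)).card : ℝ) ≤ p * ((n:ℝ) - k + 1) := by
          have h1 : (Finset.univ.biUnion (fun j => B j)).card ≤ k * t := by
            calc (Finset.univ.biUnion (fun j => B j)).card
                ≤ ∑ i : Fin s, (B i).card := Finset.card_biUnion_le
              _ = s * k := by
                  rw [Finset.sum_congr rfl (fun i _ => hcards i), Finset.sum_const,
                    Finset.card_univ, Fintype.card_fin, smul_eq_mul]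
              _ ≤ k * t := by
                  rw [mul_comm]
                  exact Nat.mul_le_mul_left k hst'
          calc ((Finset.univ.biUnion (fun j => B j)).card : ℝ)
              ≤ ((k * t : ℕ) : ℝ) := by exact_mod_cast h1
            _ ≤ p * ((n:ℝ) - k + 1) := hbound
        have := Ncount_le hp0 hp1 n (Finset.univ.biUnion (fun j => B j)) k hkn hU (x - Fsum B)
        rw [div_le_iff₀ hCpos]
        exact this
    refine (Finset.sum_le_sum (fun B _ => hle B)).trans ?_
    have hw1 : ∑ B : Fin s → Finset (Fin n), ∏ i, wgt n k (B i) = 1 := by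
      rw [← Fintype.piFinset_univ, Finset.sum_prod_piFinset]
      rw [Finset.prod_congr rfl (fun i _ => wgt_sum n k hkn), Finset.prod_const_one]
    have hdom : ∀ m, ∑ B ∈ Finset.univ.filter (fun B : Fin s → Finset (Fin n) => m ≤ Fsum B),
        ∏ i, wgt n k (B i) ≤ binTail p (k*s) m := fun m => ih hst' m
    have := expect_le hp0 hp1 (fun B : Fin s → Finset (Fin n) => ∏ i, wgt n k (B i))
      hwB0 hw1 Fsum (k*s) hdom k x
    rw [show k * (s+1) = k * s + k by ring]
    exact this

/-- The discrete `σ`-algebra on finite sets of labels. -/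
instance (α : Type*) : MeasurableSpace (Finset α) := ⊤

/-- Let `2 ≤ k ≤ n`, `t ≥ 2`, `kt ≤ n/2`, and let `S 0, …, S (t−1)` be i.i.d.
uniformly random `k`-element subsets of `{1,…,n}`. Then the number of
repetitions `M = Σᵢ |(S 0 ∪ ⋯ ∪ S (i−1)) ∩ S i|` is stochastically dominated by
a `Bin(kt, 2kt/n)` random variable: for every `x`,
`P(M ≥ x) ≤ P(Bin(kt, 2kt/n) ≥ x)`, the latter written as the explicit
binomial tail sum. -/
theorem repetitions_stochastically_dominated
    {Ω : Type*} [MeasurableSpace Ω] (P : Measure Ω) [IsProbabilityMeasure P]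
    (n k t : ℕ) (hk : 2 ≤ k) (hkn : k ≤ n) (ht : 2 ≤ t) (hkt : 2 * (k * t) ≤ n)
    (S : Fin t → Ω → Finset (Fin n))
    (hmeas : ∀ i, Measurable (S i))
    (hindep : iIndepFun S P)
    (hunif : ∀ i (A : Finset (Fin n)),
      P (S i ⁻¹' {A}) = if A.card = k then (1 : ENNReal) / (n.choose k) else 0)
    (x : ℕ) :
    P {ω | x ≤ ∑ i : Fin t,
          ((Finset.univ.filter (fun j => j < i)).biUnion (fun j => S j ω) ∩ S i ω).card}
      ≤ ENNReal.ofReal (∑ j ∈ Finset.Icc x (k * t),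
          ((k * t).choose j : ℝ) * (2 * k * t / n) ^ j *
            (1 - 2 * k * t / n) ^ (k * t - j)) := by
  classical
  set q : ℝ := 2 * (k:ℝ) * t / n with hq
  have hn0 : (0:ℝ) < n := by
    have : 2 ≤ n := le_trans hk hkn
    exact_mod_cast Nat.lt_of_lt_of_le (by norm_num) this
  have hk0 : (0:ℝ) < k := by exact_mod_cast Nat.lt_of_lt_of_le (by norm_num) hk
  have ht0 : (0:ℝ) < t := by exact_mod_cast Nat.lt_of_lt_of_le (by norm_num) ht
  have hktn : 2 * (k:ℝ) * t ≤ n := by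
    have : ((2 * (k * t) : ℕ) : ℝ) ≤ (n : ℝ) := by exact_mod_cast hkt
    push_cast at this
    linarith
  have hq0 : 0 ≤ q := by rw [hq]; positivity
  have hq1 : q ≤ 1 := by
    rw [hq, div_le_one hn0]
    linarith
  have hbound : ((k * t : ℕ) : ℝ) ≤ q * ((n:ℝ) - k + 1) := by
    rw [hq, div_mul_eq_mul_div, le_div_iff₀ hn0]
    push_cast
    have htc : (2:ℝ) ≤ t := by exact_mod_cast ht
    have h4 : 4*(k:ℝ) ≤ n := by nlinarith
    nlinarith [mul_pos hk0 ht0, h4]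
  -- the RHS equals binTail q (k*t) x
  have hrhs : (∑ j ∈ Finset.Icc x (k * t),
      ((k * t).choose j : ℝ) * (2 * k * t / n) ^ j * (1 - 2 * k * t / n) ^ (k * t - j))
      = binTail q (k*t) x := rfl
  rw [hrhs]
  -- event decomposition
  set T : Finset (Fin t → Finset (Fin n)) :=
    (Finset.univ : Finset (Fin t → Finset (Fin n))).filter (fun A => x ≤ Fsum A) with hT
  have hev : {ω | x ≤ ∑ i : Fin t,
      ((Finset.univ.filter (fun j => j < i)).biUnion (fun j => S j ω) ∩ S i ω).card}
      = ⋃ A ∈ T, ⋂ i, S i ⁻¹' {A i} := by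
    ext ω
    simp only [Set.mem_setOf_eq, Set.mem_iUnion, Set.mem_iInter, Set.mem_preimage,
      Set.mem_singleton_iff, hT, Finset.mem_filter, Finset.mem_univ, true_and]
    constructor
    · intro hx
      exact ⟨fun i => S i ω, hx, fun i => rfl⟩
    · rintro ⟨A, hA, hAi⟩
      have : (fun i => S i ω) = A := funext hAi
      unfold Fsum at hA
      rw [← this] at hA
      exact hA
  rw [hev]
  have hmeasA : ∀ A : Fin t → Finset (Fin n), MeasurableSet (⋂ i, S i ⁻¹' {A i}) :=
    fun A => MeasurableSet.iInter (fun i => hmeas i trivial)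
  have hdisj : (T : Set (Fin t → Finset (Fin n))).PairwiseDisjoint
      (fun A => ⋂ i, S i ⁻¹' {A i}) := by
    intro A _ A' _ hAA'
    apply Set.disjoint_left.mpr
    intro ω hω hω'
    simp only [Set.mem_iInter, Set.mem_preimage, Set.mem_singleton_iff] at hω hω'
    exact hAA' (funext fun i => (hω i).symm.trans (hω' i))
  rw [measure_biUnion_finset hdisj (fun A _ => hmeasA A)]
  have hprod : ∀ A : Fin t → Finset (Fin n),
      P (⋂ i, S i ⁻¹' {A i}) = ENNReal.ofReal (∏ i, wgt n k (A i)) := by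
    intro A
    have h1 : (⋂ i, S i ⁻¹' {A i}) = ⋂ i ∈ (Finset.univ : Finset (Fin t)), S i ⁻¹' {A i} := by
      simp
    rw [h1, hindep.measure_inter_preimage_eq_mul Finset.univ (fun i _ => trivial)]
    rw [ENNReal.ofReal_prod_of_nonneg (fun i _ => by unfold wgt; split <;> positivity)]
    apply Finset.prod_congr rfl
    intro i _
    rw [hunif i (A i)]
    unfold wgt
    split
    · rw [ENNReal.ofReal_div_of_pos (by exact_mod_cast Nat.choose_pos hkn),
        ENNReal.ofReal_one, ENNReal.ofReal_natCast]
    · rw [ENNReal.ofReal_zero]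
  rw [Finset.sum_congr rfl (fun A _ => hprod A)]
  rw [← ENNReal.ofReal_sum_of_nonneg
    (fun A _ => Finset.prod_nonneg (fun i _ => by unfold wgt; split <;> positivity))]
  apply ENNReal.ofReal_le_ofReal
  exact main_ind hq0 hq1 n k t hkn hbound t le_rfl x
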